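/- Let V be a real normed vector space, U ⊆ V a nonempty open connected set, Λ ∈ ℂ, and let A, p : V → ℂ be differentiable at every point of U, with A x ≠ 0, p x ≠ 0 and A x + (2·Λ/3)·p x ≠ 0 for all x ∈ U. Then the following are equivalent: (a) for every x ∈ U, ((A x) − (Λ/3)·(p x))·(p x) • fderiv ℝ A x = ((7/4)·(A x) + (Λ/6)·(p x))·(A x) • fderiv ℝ p x (an identity of continuous ℝ-linear maps V → ℂ); (b) there exists μ ∈ ℂ with μ ≠ 0 such that for every x ∈ U, ((A x) + (2·Λ/3)·(p x))⁶ = μ · (A x)² · (p x)⁷. -/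

import Mathlib

lemma aux_const_stmt10 {V : Type*} [NormedAddCommGroup V] [NormedSpace ℝ V]
    {U : Set V} (hUo : IsOpen U) (hUc : IsPreconnected U) {f : V → ℂ}
    (hd : ∀ x ∈ U, DifferentiableAt ℝ f x) (h0 : ∀ x ∈ U, fderiv ℝ f x = 0)
    {x₀ : V} (hx₀ : x₀ ∈ U) : ∀ x ∈ U, f x = f x₀ := by
  have loc : ∀ x ∈ U, ∀ᶠ y in nhds x, f y = f x := by
    intro x hx
    obtain ⟨ε, hε, hball⟩ := Metric.isOpen_iff.1 hUo x hx
    filter_upwards [Metric.ball_mem_nhds x hε] with y hy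
    exact (convex_ball x ε).is_const_of_fderivWithin_eq_zero
      (fun z hz => (hd z (hball hz)).differentiableWithinAt)
      (fun z hz => by
        rw [fderivWithin_of_isOpen Metric.isOpen_ball hz]; exact h0 z (hball hz))
      hy (Metric.mem_ball_self hε)
  set u : Set V := {x | x ∈ U ∧ f x = f x₀} with hu_def
  set v : Set V := {x | x ∈ U ∧ f x ≠ f x₀} with hv_def
  have hu : IsOpen u := by
    refine isOpen_iff_mem_nhds.2 fun x hx => ?_
    filter_upwards [loc x hx.1, hUo.mem_nhds hx.1] with y h1 h2
    exact ⟨h2, h1.trans hx.2⟩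
  have hv : IsOpen v := by
    refine isOpen_iff_mem_nhds.2 fun x hx => ?_
    filter_upwards [loc x hx.1, hUo.mem_nhds hx.1] with y h1 h2
    exact ⟨h2, by rw [h1]; exact hx.2⟩
  have hdisj : Disjoint u v := by
    rw [Set.disjoint_left]; rintro x ⟨_, h1⟩ ⟨_, h2⟩; exact h2 h1
  have hsub : U ⊆ u ∪ v := fun x hx => by
    by_cases h : f x = f x₀
    · exact Or.inl ⟨hx, h⟩
    · exact Or.inr ⟨hx, h⟩
  have : U ⊆ u :=
    hUc.subset_left_of_subset_union hu hv hdisj hsub ⟨x₀, hx₀, hx₀, rfl⟩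
  exact fun x hx => (this hx).2

theorem stmt_10 {V : Type*} [NormedAddCommGroup V] [NormedSpace ℝ V]
    (U : Set V) (hU : U.Nonempty) (hUo : IsOpen U) (hUc : IsConnected U)
    (Λ : ℂ) (A p : V → ℂ)
    (hA : ∀ x ∈ U, DifferentiableAt ℝ A x) (hp : ∀ x ∈ U, DifferentiableAt ℝ p x)
    (hA0 : ∀ x ∈ U, A x ≠ 0) (hp0 : ∀ x ∈ U, p x ≠ 0)
    (hAp : ∀ x ∈ U, A x + (2 * Λ / 3) * p x ≠ 0) :
    (∀ x ∈ U,
        ((A x - (Λ / 3) * p x) * p x) • fderiv ℝ A x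
          = (((7 / 4) * A x + (Λ / 6) * p x) * A x) • fderiv ℝ p x)
      ↔ (∃ μ : ℂ, μ ≠ 0 ∧ ∀ x ∈ U,
          (A x + (2 * Λ / 3) * p x) ^ 6 = μ * (A x) ^ 2 * (p x) ^ 7) := by
  -- abbreviations for derivative facts
  constructor
  · intro h
    set g : V → ℂ := fun y => (A y + (2 * Λ / 3) * p y) ^ 6 * ((A y) ^ 2 * (p y) ^ 7)⁻¹
      with hg_def
    have hgDeriv : ∀ x ∈ U, HasFDerivAt g
        ((A x + (2 * Λ / 3) * p x) ^ 6 •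
            ((-(((A x) ^ 2 * (p x) ^ 7) ^ 2)⁻¹) •
              ((A x) ^ 2 • (((7 : ℂ) * (p x) ^ 6) • fderiv ℝ p x)
                + (p x) ^ 7 • (((2 : ℂ) * A x) • fderiv ℝ A x)))
          + ((A x) ^ 2 * (p x) ^ 7)⁻¹ •
              (((6 : ℂ) * (A x + (2 * Λ / 3) * p x) ^ 5) •
                (fderiv ℝ A x + (2 * Λ / 3) • fderiv ℝ p x))) x := by
      intro x hx
      have hS : HasFDerivAt (fun y => A y + (2 * Λ / 3) * p y)
          (fderiv ℝ A x + (2 * Λ / 3) • fderiv ℝ p x) x :=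
        (hA x hx).hasFDerivAt.add ((hp x hx).hasFDerivAt.const_mul _)
      have hS6 : HasFDerivAt (fun y => (A y + (2 * Λ / 3) * p y) ^ 6)
          (((6 : ℂ) * (A x + (2 * Λ / 3) * p x) ^ 5) •
            (fderiv ℝ A x + (2 * Λ / 3) • fderiv ℝ p x)) x :=
        (HasDerivAt.comp_hasFDerivAt (h₂ := fun z : ℂ => z ^ 6) x (hasDerivAt_pow 6 _) hS).congr_fderiv
          (by norm_num)
      have h2 : HasFDerivAt (fun y => (A y) ^ 2) (((2 : ℂ) * A x) • fderiv ℝ A x) x :=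
        ((hasDerivAt_pow 2 (A x)).comp_hasFDerivAt x (hA x hx).hasFDerivAt).congr_fderiv
          (by norm_num)
      have h7 : HasFDerivAt (fun y => (p y) ^ 7) (((7 : ℂ) * (p x) ^ 6) • fderiv ℝ p x) x :=
        ((hasDerivAt_pow 7 (p x)).comp_hasFDerivAt x (hp x hx).hasFDerivAt).congr_fderiv
          (by norm_num)
      have hq : HasFDerivAt (fun y => (A y) ^ 2 * (p y) ^ 7)
          ((A x) ^ 2 • (((7 : ℂ) * (p x) ^ 6) • fderiv ℝ p x)
            + (p x) ^ 7 • (((2 : ℂ) * A x) • fderiv ℝ A x)) x := h2.mul h7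
      have hq0 : (A x) ^ 2 * (p x) ^ 7 ≠ 0 :=
        mul_ne_zero (pow_ne_zero _ (hA0 x hx)) (pow_ne_zero _ (hp0 x hx))
      have hqinv : HasFDerivAt (fun y => ((A y) ^ 2 * (p y) ^ 7)⁻¹)
          ((-(((A x) ^ 2 * (p x) ^ 7) ^ 2)⁻¹) •
            ((A x) ^ 2 • (((7 : ℂ) * (p x) ^ 6) • fderiv ℝ p x)
              + (p x) ^ 7 • (((2 : ℂ) * A x) • fderiv ℝ A x))) x :=
        (hasDerivAt_inv hq0).comp_hasFDerivAt x hq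
      exact hS6.mul hqinv
    have hgd : ∀ x ∈ U, DifferentiableAt ℝ g x := fun x hx =>
      (hgDeriv x hx).differentiableAt
    have hg0 : ∀ x ∈ U, fderiv ℝ g x = 0 := by
      intro x hx
      rw [(hgDeriv x hx).fderiv]
      have h2 := DFunLike.congr_fun (h x hx)
      ext v
      have hv := h2 v
      simp only [ContinuousLinearMap.coe_smul', Pi.smul_apply, smul_eq_mul] at hv
      have ha := hA0 x hx
      have hb := hp0 x hx
      have hS := hAp x hx
      simp only [ContinuousLinearMap.add_apply, ContinuousLinearMap.coe_smul',
        Pi.smul_apply, smul_eq_mul, ContinuousLinearMap.zero_apply]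
      have hq0 : (A x) ^ 2 * (p x) ^ 7 ≠ 0 :=
        mul_ne_zero (pow_ne_zero _ ha) (pow_ne_zero _ hb)
      have hqw : ((A x) ^ 2 * (p x) ^ 7) * ((A x) ^ 2 * (p x) ^ 7)⁻¹ = 1 :=
        mul_inv_cancel₀ hq0
      linear_combination
        (4 * (A x + 2 * Λ / 3 * p x) ^ 5 * A x * (p x) ^ 6 *
          (((A x) ^ 2 * (p x) ^ 7)⁻¹) ^ 2) * hv
        - ((6 * (A x + 2 * Λ / 3 * p x) ^ 5 *
            ((fderiv ℝ A x v) + 2 * Λ / 3 * (fderiv ℝ p x v))) *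
            ((A x) ^ 2 * (p x) ^ 7)⁻¹) * hqw
    obtain ⟨x₀, hx₀⟩ := hU
    have hconst := aux_const_stmt10 hUo hUc.isPreconnected hgd hg0 hx₀
    have hq00 : (A x₀) ^ 2 * (p x₀) ^ 7 ≠ 0 :=
      mul_ne_zero (pow_ne_zero _ (hA0 x₀ hx₀)) (pow_ne_zero _ (hp0 x₀ hx₀))
    refine ⟨(A x₀ + (2 * Λ / 3) * p x₀) ^ 6 * ((A x₀) ^ 2 * (p x₀) ^ 7)⁻¹, ?_, ?_⟩
    · exact mul_ne_zero (pow_ne_zero _ (hAp x₀ hx₀)) (inv_ne_zero hq00)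
    · intro x hx
      have hgx : g x = g x₀ := hconst x hx
      have hq0 : (A x) ^ 2 * (p x) ^ 7 ≠ 0 :=
        mul_ne_zero (pow_ne_zero _ (hA0 x hx)) (pow_ne_zero _ (hp0 x hx))
      have hgx' : (A x + (2 * Λ / 3) * p x) ^ 6 * ((A x) ^ 2 * (p x) ^ 7)⁻¹
          = (A x₀ + (2 * Λ / 3) * p x₀) ^ 6 * ((A x₀) ^ 2 * (p x₀) ^ 7)⁻¹ := hgx
      have hstep : (A x + (2 * Λ / 3) * p x) ^ 6
          = (A x + (2 * Λ / 3) * p x) ^ 6 * ((A x) ^ 2 * (p x) ^ 7)⁻¹ *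
              ((A x) ^ 2 * (p x) ^ 7) := (inv_mul_cancel_right₀ hq0 _).symm
      rw [hstep, hgx']; ring
  · rintro ⟨μ, hμ, hμx⟩
    intro x hx
    have hS : HasFDerivAt (fun y => A y + (2 * Λ / 3) * p y)
        (fderiv ℝ A x + (2 * Λ / 3) • fderiv ℝ p x) x :=
      (hA x hx).hasFDerivAt.add ((hp x hx).hasFDerivAt.const_mul _)
    have hS6 : HasFDerivAt (fun y => (A y + (2 * Λ / 3) * p y) ^ 6)
        (((6 : ℂ) * (A x + (2 * Λ / 3) * p x) ^ 5) •
          (fderiv ℝ A x + (2 * Λ / 3) • fderiv ℝ p x)) x :=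
      (HasDerivAt.comp_hasFDerivAt (h₂ := fun z : ℂ => z ^ 6) x (hasDerivAt_pow 6 _) hS).congr_fderiv
        (by norm_num)
    have h2 : HasFDerivAt (fun y => (A y) ^ 2) (((2 : ℂ) * A x) • fderiv ℝ A x) x :=
      ((hasDerivAt_pow 2 (A x)).comp_hasFDerivAt x (hA x hx).hasFDerivAt).congr_fderiv
        (by norm_num)
    have h7 : HasFDerivAt (fun y => (p y) ^ 7) (((7 : ℂ) * (p x) ^ 6) • fderiv ℝ p x) x :=
      ((hasDerivAt_pow 7 (p x)).comp_hasFDerivAt x (hp x hx).hasFDerivAt).congr_fderiv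
        (by norm_num)
    have hq : HasFDerivAt (fun y => μ * ((A y) ^ 2 * (p y) ^ 7))
        (μ • ((A x) ^ 2 • (((7 : ℂ) * (p x) ^ 6) • fderiv ℝ p x)
          + (p x) ^ 7 • (((2 : ℂ) * A x) • fderiv ℝ A x))) x :=
      (h2.mul h7).const_mul μ
    have heq : fderiv ℝ (fun y => (A y + (2 * Λ / 3) * p y) ^ 6) x
        = fderiv ℝ (fun y => μ * ((A y) ^ 2 * (p y) ^ 7)) x := by
      apply Filter.EventuallyEq.fderiv_eq
      filter_upwards [hUo.mem_nhds hx] with y hy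
      rw [hμx y hy]; ring
    rw [hS6.fderiv, hq.fderiv] at heq
    have hvv := DFunLike.congr_fun heq
    ext v
    have hv := hvv v
    simp only [ContinuousLinearMap.add_apply, ContinuousLinearMap.coe_smul',
      Pi.smul_apply, smul_eq_mul] at hv ⊢
    have hS0 : A x + 2 * Λ / 3 * p x ≠ 0 := hAp x hx
    have hmx := hμx x hx
    have key : (4 * (A x + 2 * Λ / 3 * p x) ^ 5) *
          ((A x - Λ / 3 * p x) * p x * (fderiv ℝ A x v))
        = (4 * (A x + 2 * Λ / 3 * p x) ^ 5) *
          ((7 / 4 * A x + Λ / 6 * p x) * A x * (fderiv ℝ p x v)) := by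
      linear_combination (A x * p x) * hv
        - (2 * p x * (fderiv ℝ A x v) + 7 * A x * (fderiv ℝ p x v)) * hmx
    exact mul_left_cancel₀ (mul_ne_zero (by norm_num : (4:ℂ) ≠ 0) (pow_ne_zero _ hS0)) key
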